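/- Let f : ℂ → ℂ be twice continuously differentiable as a map of real vector spaces, and define the vector fields Γ₁ and Γ₂ of the loop QH² acting on f by (Γ₁ f)(η) = (1 − |η|²)·∂f(η) and (Γ₂ f)(η) = (1 − |η|²)·∂̄f(η). Then for every η ∈ ℂ, (Γ₁(Γ₂ f))(η) − (Γ₂(Γ₁ f))(η) = η·(Γ₁ f)(η) − conj(η)·(Γ₂ f)(η); i.e. the commutator satisfies [Γ₁, Γ₂] = η·Γ₁ − conj(η)·Γ₂. -/

import Mathlib

open Complex

/-- Wirtinger derivative ∂f(η) = (1/2)(Df(η)(1) − i·Df(η)(i)) of a real-differentiable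
    map f : ℂ → ℂ. -/
noncomputable def wirtD (f : ℂ → ℂ) (η : ℂ) : ℂ :=
  (1 / 2) * (fderiv ℝ f η 1 - Complex.I * fderiv ℝ f η Complex.I)

/-- Conjugate Wirtinger derivative ∂̄f(η) = (1/2)(Df(η)(1) + i·Df(η)(i)). -/
noncomputable def wirtDbar (f : ℂ → ℂ) (η : ℂ) : ℂ :=
  (1 / 2) * (fderiv ℝ f η 1 + Complex.I * fderiv ℝ f η Complex.I)

/-- The vector field Γ₁ = (1 − |η|²)∂_η of the loop QH². -/
noncomputable def Gamma1 (f : ℂ → ℂ) (η : ℂ) : ℂ :=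
  (1 - (Complex.normSq η : ℂ)) * wirtD f η

/-- The vector field Γ₂ = (1 − |η|²)∂_{conj η} of the loop QH². -/
noncomputable def Gamma2 (f : ℂ → ℂ) (η : ℂ) : ℂ :=
  (1 - (Complex.normSq η : ℂ)) * wirtDbar f η

/-- Key computation: the derivative of `(1 - |z|²)·(1/2)(Df(z)(1) + ε·Df(z)(i))` in the
    direction `v`, for a C² function `f` and any constant `ε`. -/
theorem fderiv_gamma_aux (f : ℂ → ℂ) (hf : ContDiff ℝ 2 f) (ε η v : ℂ) :
    fderiv ℝ (fun z => (1 - (Complex.normSq z : ℂ)) *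
      ((1/2) * (fderiv ℝ f z 1 + ε * fderiv ℝ f z Complex.I))) η v
    = -(starRingEnd ℂ η * v + η * starRingEnd ℂ v) *
        ((1/2) * (fderiv ℝ f η 1 + ε * fderiv ℝ f η Complex.I))
      + (1 - (Complex.normSq η : ℂ)) *
        ((1/2) * (fderiv ℝ (fderiv ℝ f) η v 1 + ε * fderiv ℝ (fderiv ℝ f) η v Complex.I)) := by
  have hF : Differentiable ℝ (fderiv ℝ f) :=
    (hf.fderiv_right (m := 1) (by norm_num)).differentiable one_ne_zero
  have h1 : HasFDerivAt (fun z => fderiv ℝ f z 1)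
      ((ContinuousLinearMap.apply ℝ ℂ (1:ℂ)).comp (fderiv ℝ (fderiv ℝ f) η)) η :=
    (ContinuousLinearMap.apply ℝ ℂ (1:ℂ)).hasFDerivAt.comp η (hF η).hasFDerivAt
  have hI : HasFDerivAt (fun z => fderiv ℝ f z Complex.I)
      ((ContinuousLinearMap.apply ℝ ℂ Complex.I).comp (fderiv ℝ (fderiv ℝ f) η)) η :=
    (ContinuousLinearMap.apply ℝ ℂ Complex.I).hasFDerivAt.comp η (hF η).hasFDerivAt
  have hns0 := (hasFDerivAt_id η).mul' (Complex.conjCLE.hasFDerivAt (x := η))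
  have hns : HasFDerivAt (fun z : ℂ => (Complex.normSq z : ℂ))
      (η • (Complex.conjCLE : ℂ →L[ℝ] ℂ) +
        (ContinuousLinearMap.id ℝ ℂ).smulRight (starRingEnd ℂ η)) η := by
    have heq : (fun z : ℂ => (Complex.normSq z : ℂ)) = fun z => z * starRingEnd ℂ z := by
      ext z; rw [Complex.mul_conj]
    rw [heq]; exact hns0
  have hs := (hasFDerivAt_const (1:ℂ) η).sub hns
  have hin := ((h1.add (hI.const_mul ε)).const_mul (1/2 : ℂ))
  have htot := hs.mul' hin
  erw [htot.fderiv]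
  simp [ContinuousLinearMap.smul_apply]
  ring

/-- the commutator of the left quasi-invariant vector fields of QH² is
    [Γ₁, Γ₂] = η·Γ₁ − conj(η)·Γ₂. -/
theorem qh2_commutator (f : ℂ → ℂ) (hf : ContDiff ℝ 2 f) (η : ℂ) :
    Gamma1 (Gamma2 f) η - Gamma2 (Gamma1 f) η =
      η * Gamma1 f η - (starRingEnd ℂ) η * Gamma2 f η := by
  have e2 : Gamma2 f = fun z => (1 - (Complex.normSq z : ℂ)) *
      ((1/2) * (fderiv ℝ f z 1 + Complex.I * fderiv ℝ f z Complex.I)) := rfl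
  have e1 : Gamma1 f = fun z => (1 - (Complex.normSq z : ℂ)) *
      ((1/2) * (fderiv ℝ f z 1 + (-Complex.I) * fderiv ℝ f z Complex.I)) := by
    funext z
    simp only [Gamma1, wirtD, neg_mul, sub_eq_add_neg]
  have hsym : fderiv ℝ (fderiv ℝ f) η 1 Complex.I = fderiv ℝ (fderiv ℝ f) η Complex.I 1 :=
    (hf.contDiffAt.isSymmSndFDerivAt (by norm_num)) 1 Complex.I
  have k2 := fun v => fderiv_gamma_aux f hf Complex.I η v
  have k1 := fun v => fderiv_gamma_aux f hf (-Complex.I) η v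
  show (1 - (Complex.normSq η : ℂ)) * ((1/2) * (fderiv ℝ (Gamma2 f) η 1 -
      Complex.I * fderiv ℝ (Gamma2 f) η Complex.I)) -
    (1 - (Complex.normSq η : ℂ)) * ((1/2) * (fderiv ℝ (Gamma1 f) η 1 +
      Complex.I * fderiv ℝ (Gamma1 f) η Complex.I)) = _
  rw [e1, e2, k2 1, k2 Complex.I, k1 1, k1 Complex.I]
  simp only [map_one, Complex.conj_I, Gamma1, Gamma2, wirtD, wirtDbar, hsym]
  ring_nf
  simp only [Complex.I_sq]
  ring
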